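/- Let p be a prime, k ≥ 1 an integer, θ ∈ ℚ_p with |θ|_p ≥ 1, and 0 < δ < 1. Let λ be a null sequence in ℚ_p with |λ(i)|_p ≤ δ for all i. Then the map 𝓕_θ on B_δ given by (𝓕_θ(x))_i = λ(i)·(F_i(x,θ))^k has a unique fixed point in B_δ. -/

import Mathlib

open Filter Topology BigOperators

noncomputable def Fmap {p : ℕ} [Fact p.Prime] (θ : ℚ_[p]) (x : ℕ → ℚ_[p]) (i : ℕ) : ℚ_[p] :=
  ((θ - 1) * x i + (∑' j, x j) + 1) / ((∑' j, x j) + θ)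

namespace Stmt6Aux

open IsUltrametricDist

variable {p : ℕ} [Fact p.Prime]

lemma summable_of_tendsto {x : ℕ → ℚ_[p]} (hx : Tendsto x atTop (nhds 0)) : Summable x :=
  NonarchimedeanAddGroup.summable_of_tendsto_cofinite_zero (by rwa [Nat.cofinite_eq_atTop])

lemma norm_theta_sub_one_le {θ : ℚ_[p]} (hθ : 1 ≤ ‖θ‖) : ‖θ - 1‖ ≤ ‖θ‖ := by
  have h := norm_add_le_max θ (-1)
  rw [← sub_eq_add_neg, norm_neg, norm_one] at h
  exact h.trans (max_le le_rfl hθ)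

lemma norm_one_sub_le {θ a : ℚ_[p]} (hθ : 1 ≤ ‖θ‖) (ha : ‖a‖ ≤ 1) : ‖1 - a‖ ≤ ‖θ‖ := by
  have h := norm_add_le_max (1 : ℚ_[p]) (-a)
  rw [← sub_eq_add_neg, norm_neg, norm_one] at h
  exact h.trans (max_le hθ (ha.trans hθ))

lemma norm_den_eq {θ : ℚ_[p]} (hθ : 1 ≤ ‖θ‖) {δ : ℝ} (hδ1 : δ < 1) {S : ℚ_[p]}
    (hS : ‖S‖ ≤ δ) : ‖S + θ‖ = ‖θ‖ := by
  have hlt : ‖S‖ < ‖θ‖ := lt_of_le_of_lt hS (hδ1.trans_le hθ)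
  rw [norm_add_eq_max_of_norm_ne_norm hlt.ne, max_eq_right hlt.le]

lemma norm_tsum_le {δ : ℝ} (hδ0 : 0 ≤ δ) {x : ℕ → ℚ_[p]} (hx : ∀ i, ‖x i‖ ≤ δ) :
    ‖∑' j, x j‖ ≤ δ :=
  norm_tsum_le_of_forall_le_of_nonneg hδ0 hx

lemma normF_le_one {θ : ℚ_[p]} (hθ : 1 ≤ ‖θ‖) {δ : ℝ} (hδ0 : 0 < δ) (hδ1 : δ < 1)
    {x : ℕ → ℚ_[p]} (hx : ∀ i, ‖x i‖ ≤ δ) (i : ℕ) : ‖Fmap θ x i‖ ≤ 1 := by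
  have hθ0 : (0 : ℝ) < ‖θ‖ := lt_of_lt_of_le one_pos hθ
  have hS : ‖∑' j, x j‖ ≤ δ := norm_tsum_le hδ0.le hx
  have hden : ‖(∑' j, x j) + θ‖ = ‖θ‖ := norm_den_eq hθ hδ1 hS
  rw [Fmap, norm_div, hden, div_le_one hθ0]
  have h1 : ‖(θ - 1) * x i‖ ≤ ‖θ‖ := by
    rw [norm_mul]
    have := mul_le_mul (norm_theta_sub_one_le hθ) ((hx i).trans hδ1.le) (norm_nonneg _) hθ0.le
    simpa using this
  have h2 : ‖∑' j, x j‖ ≤ ‖θ‖ := hS.trans (hδ1.le.trans hθ)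
  have h3 : ‖(1 : ℚ_[p])‖ ≤ ‖θ‖ := by rw [norm_one]; exact hθ
  exact le_trans (norm_add_le_max _ _)
    (max_le (le_trans (norm_add_le_max _ _) (max_le h1 h2)) h3)

lemma normF_sub_le {θ : ℚ_[p]} (hθ : 1 ≤ ‖θ‖) {δ : ℝ} (hδ0 : 0 < δ) (hδ1 : δ < 1)
    {x y : ℕ → ℚ_[p]} (hx : ∀ i, ‖x i‖ ≤ δ) (hy : ∀ i, ‖y i‖ ≤ δ)
    (hsx : Summable x) (hsy : Summable y) {d : ℝ} (hd0 : 0 ≤ d)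
    (hdj : ∀ j, ‖x j - y j‖ ≤ d) (i : ℕ) : ‖Fmap θ x i - Fmap θ y i‖ ≤ d := by
  have hθ0 : (0 : ℝ) < ‖θ‖ := lt_of_lt_of_le one_pos hθ
  have hSx : ‖∑' j, x j‖ ≤ δ := norm_tsum_le hδ0.le hx
  have hSy : ‖∑' j, y j‖ ≤ δ := norm_tsum_le hδ0.le hy
  have hdenx : ‖(∑' j, x j) + θ‖ = ‖θ‖ := norm_den_eq hθ hδ1 hSx
  have hdeny : ‖(∑' j, y j) + θ‖ = ‖θ‖ := norm_den_eq hθ hδ1 hSy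
  have hnex : (∑' j, x j) + θ ≠ 0 := by
    intro h0; rw [h0, norm_zero] at hdenx; exact hθ0.ne hdenx
  have hney : (∑' j, y j) + θ ≠ 0 := by
    intro h0; rw [h0, norm_zero] at hdeny; exact hθ0.ne hdeny
  have hSsub : ‖(∑' j, x j) - (∑' j, y j)‖ ≤ d := by
    rw [← Summable.tsum_sub hsx hsy]
    exact norm_tsum_le_of_forall_le_of_nonneg hd0 hdj
  have key : Fmap θ x i - Fmap θ y i =
      ((θ - 1) * (x i - y i) * ((∑' j, y j) + θ)
        + (θ - 1) * ((∑' j, x j) - (∑' j, y j)) * (1 - y i))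
        / (((∑' j, x j) + θ) * ((∑' j, y j) + θ)) := by
    rw [Fmap, Fmap]
    field_simp
    ring
  rw [key, norm_div, norm_mul, hdenx, hdeny, div_le_iff₀ (by positivity)]
  have h1 : ‖(θ - 1) * (x i - y i) * ((∑' j, y j) + θ)‖ ≤ ‖θ‖ * d * ‖θ‖ := by
    rw [norm_mul, norm_mul, hdeny]
    have := mul_le_mul (norm_theta_sub_one_le hθ) (hdj i) (norm_nonneg _) hθ0.le
    exact mul_le_mul_of_nonneg_right this hθ0.le
  have h2 : ‖(θ - 1) * ((∑' j, x j) - (∑' j, y j)) * (1 - y i)‖ ≤ ‖θ‖ * d * ‖θ‖ := by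
    rw [norm_mul, norm_mul]
    have hy1 : ‖1 - y i‖ ≤ ‖θ‖ := norm_one_sub_le hθ ((hy i).trans hδ1.le)
    have := mul_le_mul (norm_theta_sub_one_le hθ) hSsub (norm_nonneg _) hθ0.le
    exact mul_le_mul this hy1 (norm_nonneg _) (by positivity)
  refine le_trans (norm_add_le_max _ _) (max_le (h1.trans ?_) (h2.trans ?_)) <;> nlinarith

lemma norm_pow_sub_pow_le (k : ℕ) {a b : ℚ_[p]} (ha : ‖a‖ ≤ 1) (hb : ‖b‖ ≤ 1) {d : ℝ}
    (hd0 : 0 ≤ d) (hab : ‖a - b‖ ≤ d) : ‖a ^ k - b ^ k‖ ≤ d := by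
  induction k with
  | zero => simpa using hd0
  | succ n ih =>
    have key : a ^ (n + 1) - b ^ (n + 1) = a * (a ^ n - b ^ n) + (a - b) * b ^ n := by ring
    rw [key]
    refine le_trans (norm_add_le_max _ _) (max_le ?_ ?_)
    · rw [norm_mul]
      have := mul_le_mul ha ih (norm_nonneg _) zero_le_one
      simpa using this
    · rw [norm_mul, norm_pow]
      have hbn : ‖b‖ ^ n ≤ 1 := pow_le_one₀ (norm_nonneg b) hb
      have := mul_le_mul hab hbn (by positivity) hd0
      simpa using this

end Stmt6Aux

theorem stmt6 (p k : ℕ) [Fact p.Prime] (hk : 1 ≤ k) (θ : ℚ_[p]) (hθ : 1 ≤ ‖θ‖)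
    (δ : ℝ) (hδ0 : 0 < δ) (hδ1 : δ < 1) (l : ℕ → ℚ_[p])
    (hl0 : Tendsto l atTop (nhds 0)) (hl : ∀ i, ‖l i‖ ≤ δ) :
    ∃! x : ℕ → ℚ_[p],
      (Tendsto x atTop (nhds 0) ∧ ∀ i, ‖x i‖ ≤ δ) ∧
        ∀ i, x i = l i * (Fmap θ x i) ^ k := by
  classical
  set E := ZeroAtInftyContinuousMap ℕ ℚ_[p] with hE
  -- membership characterization
  have memball_iff : ∀ f : E, f ∈ Metric.closedBall (0 : E) δ ↔ ∀ i, ‖f i‖ ≤ δ := by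
    intro f
    rw [Metric.mem_closedBall, dist_zero_right,
      ← ZeroAtInftyContinuousMap.norm_toBCF_eq_norm, BoundedContinuousFunction.norm_le hδ0.le]
    exact Iff.rfl
  have tendsto_of_mem : ∀ f : E, Tendsto (⇑f) atTop (nhds 0) := fun f => by
    have := zero_at_infty f
    rwa [cocompact_eq_atTop (α := ℕ)] at this
  -- image properties
  have himg : ∀ x : ℕ → ℚ_[p], Tendsto x atTop (nhds 0) → (∀ i, ‖x i‖ ≤ δ) →
      Tendsto (fun i => l i * (Fmap θ x i) ^ k) atTop (nhds 0) ∧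
        ∀ i, ‖l i * (Fmap θ x i) ^ k‖ ≤ δ := by
    intro x hx0 hxb
    have hFn : ∀ i, ‖l i * (Fmap θ x i) ^ k‖ ≤ ‖l i‖ := by
      intro i
      rw [norm_mul, norm_pow]
      have h1 : ‖Fmap θ x i‖ ^ k ≤ 1 :=
        pow_le_one₀ (norm_nonneg _) (Stmt6Aux.normF_le_one hθ hδ0 hδ1 hxb i)
      have := mul_le_mul_of_nonneg_left h1 (norm_nonneg (l i))
      simpa using this
    refine ⟨squeeze_zero_norm hFn ?_, fun i => (hFn i).trans (hl i)⟩
    simpa using tendsto_zero_iff_norm_tendsto_zero.mp hl0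
  -- the self-map on the closed ball
  let T : Metric.closedBall (0 : E) δ → Metric.closedBall (0 : E) δ := fun x =>
    ⟨⟨⟨fun i => l i * (Fmap θ (⇑x.1) i) ^ k, continuous_of_discreteTopology⟩, by
        rw [cocompact_eq_atTop (α := ℕ)]
        exact (himg _ (tendsto_of_mem x.1) ((memball_iff x.1).mp x.2)).1⟩, by
      rw [memball_iff]
      exact (himg _ (tendsto_of_mem x.1) ((memball_iff x.1).mp x.2)).2⟩
  -- contraction
  have hcontr : ContractingWith ⟨δ, hδ0.le⟩ T := by
    constructor
    · exact (NNReal.coe_lt_coe (r₁ := ⟨δ, hδ0.le⟩) (r₂ := 1)).mp hδ1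
    · refine LipschitzWith.of_dist_le_mul fun x y => ?_
      have hxb := (memball_iff x.1).mp x.2
      have hyb := (memball_iff y.1).mp y.2
      have hdj : ∀ j, ‖x.1 j - y.1 j‖ ≤ dist x y := by
        intro j
        have h := BoundedContinuousFunction.dist_coe_le_dist
          (f := (x.1 : E).toBCF) (g := (y.1 : E).toBCF) j
        rw [ZeroAtInftyContinuousMap.dist_toBCF_eq_dist, dist_eq_norm] at h
        rwa [Subtype.dist_eq]
      have hFsub : ∀ i, ‖Fmap θ (⇑x.1) i - Fmap θ (⇑y.1) i‖ ≤ dist x y :=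
        Stmt6Aux.normF_sub_le hθ hδ0 hδ1 hxb hyb
          (Stmt6Aux.summable_of_tendsto (tendsto_of_mem x.1))
          (Stmt6Aux.summable_of_tendsto (tendsto_of_mem y.1)) dist_nonneg hdj
      have hb : dist (T x) (T y) ≤ δ * dist x y := by
        rw [Subtype.dist_eq, ← ZeroAtInftyContinuousMap.dist_toBCF_eq_dist,
          BoundedContinuousFunction.dist_le (by positivity)]
        intro i
        rw [dist_eq_norm]
        show ‖l i * (Fmap θ (⇑x.1) i) ^ k - l i * (Fmap θ (⇑y.1) i) ^ k‖ ≤ δ * dist x y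
        rw [← mul_sub, norm_mul]
        refine mul_le_mul (hl i) ?_ (norm_nonneg _) hδ0.le
        exact Stmt6Aux.norm_pow_sub_pow_le k (Stmt6Aux.normF_le_one hθ hδ0 hδ1 hxb i)
          (Stmt6Aux.normF_le_one hθ hδ0 hδ1 hyb i) dist_nonneg (hFsub i)
      exact hb
  -- existence via Banach fixed point theorem
  haveI : Nonempty (Metric.closedBall (0 : E) δ) :=
    ⟨⟨0, Metric.mem_closedBall_self hδ0.le⟩⟩
  haveI : CompleteSpace (Metric.closedBall (0 : E) δ) :=
    (Metric.isClosed_closedBall).completeSpace_coe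
  let y := ContractingWith.fixedPoint T hcontr
  have hfix : T y = y := hcontr.fixedPoint_isFixedPt
  have heq : ∀ i, (y.1 : ℕ → ℚ_[p]) i = l i * (Fmap θ (⇑y.1) i) ^ k := by
    intro i
    have := congrArg Subtype.val hfix
    exact (DFunLike.congr_fun this i).symm
  -- uniqueness, by hand
  have uniq : ∀ a b : ℕ → ℚ_[p],
      ((Tendsto a atTop (nhds 0) ∧ ∀ i, ‖a i‖ ≤ δ) ∧ ∀ i, a i = l i * (Fmap θ a i) ^ k) →
      ((Tendsto b atTop (nhds 0) ∧ ∀ i, ‖b i‖ ≤ δ) ∧ ∀ i, b i = l i * (Fmap θ b i) ^ k) →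
      a = b := by
    rintro a b ⟨⟨ha0, hab⟩, haeq⟩ ⟨⟨hb0, hbb⟩, hbeq⟩
    have hbdd : BddAbove (Set.range fun i => ‖a i - b i‖) := by
      refine ⟨δ + δ, ?_⟩
      rintro _ ⟨i, rfl⟩
      exact (norm_sub_le _ _).trans (add_le_add (hab i) (hbb i))
    set d : ℝ := ⨆ i, ‖a i - b i‖ with hd
    have hdj : ∀ j, ‖a j - b j‖ ≤ d := fun j => le_ciSup hbdd j
    have hd0 : 0 ≤ d := (norm_nonneg _).trans (hdj 0)
    have hstep : ∀ i, ‖a i - b i‖ ≤ δ * d := by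
      intro i
      rw [haeq i, hbeq i, ← mul_sub, norm_mul]
      refine mul_le_mul (hl i) ?_ (norm_nonneg _) hδ0.le
      refine Stmt6Aux.norm_pow_sub_pow_le k (Stmt6Aux.normF_le_one hθ hδ0 hδ1 hab i)
        (Stmt6Aux.normF_le_one hθ hδ0 hδ1 hbb i) hd0 ?_
      exact Stmt6Aux.normF_sub_le hθ hδ0 hδ1 hab hbb
        (Stmt6Aux.summable_of_tendsto ha0) (Stmt6Aux.summable_of_tendsto hb0) hd0 hdj i
    have hled : d ≤ δ * d := ciSup_le hstep
    have hdz : d = 0 := by nlinarith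
    funext i
    have : ‖a i - b i‖ ≤ 0 := (hdj i).trans hdz.le
    have := le_antisymm this (norm_nonneg _)
    exact sub_eq_zero.mp (norm_eq_zero.mp this)
  refine ⟨fun i => (y.1 : ℕ → ℚ_[p]) i, ⟨⟨tendsto_of_mem y.1, (memball_iff y.1).mp y.2⟩, heq⟩,
    fun z hz => uniq z _ hz ⟨⟨tendsto_of_mem y.1, (memball_iff y.1).mp y.2⟩, heq⟩⟩
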